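/- Let f : ℝ^n → ℝ be continuously differentiable, attain its minimum value f* at some point, and satisfy the Polyak–Łojasiewicz (PL) inequality with parameter μ > 0: (1/2)‖∇f(z)‖₂² ≥ μ(f(z) − f*) for all z ∈ ℝ^n. Let α > 0 and define g : ℝ^n → ℝ^n by g(y) = α·e^{‖y‖₂}·y/‖y‖₂ for y ≠ 0 and g(0) = 0. If x : [0,∞) → ℝ^n is differentiable and x′(t) = −g(∇f(x(t))) for all t ≥ 0, then f(x(t)) = f* for all t ≥ 1/(αμ), a fixed-time bound independent of the initial state x(0). (Proposition 1.) -/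

import Mathlib

open Set Real

/-- Monotonicity of `s ↦ s * exp s` on nonnegative reals. -/
lemma mul_exp_mono_aux {a b : ℝ} (h0 : 0 ≤ a) (h : a ≤ b) :
    a * Real.exp a ≤ b * Real.exp b :=
  mul_le_mul h (Real.exp_le_exp.2 h) (Real.exp_pos a).le (le_trans h0 h)

/-- Proposition 1: fixed-time convergence of the exponential gradient flow
x' = -α e^{‖∇f(x)‖} ∇f(x)/‖∇f(x)‖ with bound 1/(αμ) independent of x(0). -/
theorem exp_fxtgf_fixed_time_convergence
    {n : ℕ} (f : EuclideanSpace ℝ (Fin n) → ℝ) (fstar μ α : ℝ)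
    (hf : ContDiff ℝ 1 f)
    (hmin : ∃ z, f z = fstar) (hlb : ∀ z, fstar ≤ f z)
    (hμ : 0 < μ)
    (hPL : ∀ z, μ * (f z - fstar) ≤ (1/2) * ‖gradient f z‖ ^ 2)
    (hα : 0 < α)
    (g : EuclideanSpace ℝ (Fin n) → EuclideanSpace ℝ (Fin n))
    (hg : ∀ y, y ≠ 0 → g y = (α * Real.exp ‖y‖ / ‖y‖) • y) (hg0 : g 0 = 0)
    (x : ℝ → EuclideanSpace ℝ (Fin n))
    (hx : ∀ t ≥ (0:ℝ), HasDerivAt x (-(g (gradient f (x t)))) t) :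
    ∀ t : ℝ, 1 / (α * μ) ≤ t → f (x t) = fstar := by
  have hαμ : 0 < α * μ := mul_pos hα hμ
  have hT0 : 0 < 1 / (α * μ) := by positivity
  have hdiff : Differentiable ℝ f := hf.differentiable one_ne_zero
  set V : ℝ → ℝ := fun s => f (x s) - fstar with hVdef
  have hVnn : ∀ s, 0 ≤ V s := fun s => sub_nonneg.2 (hlb _)
  set D : ℝ → ℝ :=
    fun s => inner (𝕜 := ℝ) (gradient f (x s)) (-(g (gradient f (x s)))) with hDdef
  have hVder : ∀ s ∈ Ici (0:ℝ), HasDerivAt V (D s) s := by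
    intro s hs
    have h1 : HasFDerivAt f
        (InnerProductSpace.toDual ℝ _ (gradient f (x s))) (x s) :=
      (hdiff (x s)).hasGradientAt.hasFDerivAt
    have h2 := h1.comp_hasDerivAt s (hx s hs)
    have h3 := h2.sub_const fstar
    have h4 : D s = (InnerProductSpace.toDual ℝ _ (gradient f (x s)))
        (-(g (gradient f (x s)))) := InnerProductSpace.toDual_apply_apply.symm
    rw [h4]
    exact h3
  have hDval : ∀ s, gradient f (x s) ≠ 0 →
      D s = -(α * Real.exp ‖gradient f (x s)‖ * ‖gradient f (x s)‖) := by
    intro s hne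
    have hn : (0:ℝ) < ‖gradient f (x s)‖ := norm_pos_iff.mpr hne
    simp only [hDdef, hg _ hne, inner_neg_right, real_inner_smul_right,
      real_inner_self_eq_norm_sq]
    field_simp
  have hD0 : ∀ s, D s ≤ 0 := by
    intro s
    by_cases hne : gradient f (x s) = 0
    · simp [hDdef, hne, hg0]
    · rw [hDval s hne]
      have h1 := Real.exp_pos ‖gradient f (x s)‖
      nlinarith [norm_nonneg (gradient f (x s)), mul_pos hα h1]
  have hxc : ContinuousOn x (Ici 0) :=
    fun s hs => ((hx s hs).continuousAt).continuousWithinAt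
  have hVc : ContinuousOn V (Ici 0) :=
    (hdiff.continuous.comp_continuousOn hxc).sub continuousOn_const
  have hVdiff : DifferentiableOn ℝ V (interior (Ici (0:ℝ))) := by
    intro s hs
    rw [interior_Ici] at hs
    exact ((hVder s (mem_Ici.2 (le_of_lt hs))).differentiableAt).differentiableWithinAt
  have hanti : AntitoneOn V (Ici 0) := by
    refine antitoneOn_of_deriv_nonpos (convex_Ici 0) hVc hVdiff ?_
    intro s hs
    rw [interior_Ici] at hs
    rw [(hVder s (mem_Ici.2 (le_of_lt hs))).deriv]
    exact hD0 s
  have hVT : V (1/(α*μ)) = 0 := by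
    by_contra hne0
    have hVTpos : 0 < V (1/(α*μ)) := lt_of_le_of_ne (hVnn _) (Ne.symm hne0)
    have hVpos : ∀ s ∈ Icc (0:ℝ) (1/(α*μ)), 0 < V s := fun s hs =>
      lt_of_lt_of_le hVTpos (hanti (mem_Ici.2 hs.1) (mem_Ici.2 hT0.le) hs.2)
    set φ : ℝ → ℝ := fun s => Real.exp (-(Real.sqrt (2*μ*V s))) with hφdef
    have hφder : ∀ s ∈ Ioo (0:ℝ) (1/(α*μ)),
        HasDerivAt φ
          (Real.exp (-(Real.sqrt (2*μ*V s))) *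
            (-(1 / (2 * Real.sqrt (2*μ*V s)) * (2*μ*D s)))) s := by
      intro s hs
      have hVs : 0 < V s := hVpos s (Ioo_subset_Icc_self hs)
      have h2 : HasDerivAt (fun s => 2*μ*V s) (2*μ*D s) s :=
        (hVder s (mem_Ici.2 hs.1.le)).const_mul _
      have h3 := (Real.hasDerivAt_sqrt (by positivity : 2*μ*V s ≠ 0)).comp s h2
      have h4 := h3.neg
      have h5 := (Real.hasDerivAt_exp (-(Real.sqrt (2*μ*V s)))).comp s h4
      exact h5
    have hφbound : ∀ s ∈ Ioo (0:ℝ) (1/(α*μ)),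
        α * μ ≤ Real.exp (-(Real.sqrt (2*μ*V s))) *
            (-(1 / (2 * Real.sqrt (2*μ*V s)) * (2*μ*D s))) := by
      intro s hs
      have hVs : 0 < V s := hVpos s (Ioo_subset_Icc_self hs)
      set u := Real.sqrt (2*μ*V s) with hu
      have hupos : 0 < u := Real.sqrt_pos.2 (by positivity)
      have hne : gradient f (x s) ≠ 0 := by
        intro h0
        have := hPL (x s)
        rw [h0] at this
        simp at this
        have hVs' : 0 < f (x s) - fstar := hVs
        nlinarith [mul_pos hμ hVs']
      set G := ‖gradient f (x s)‖ with hG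
      have hGpos : 0 < G := norm_pos_iff.mpr hne
      have huG : u ≤ G := by
        have h1 : 2*μ*V s ≤ G^2 := by
          have h2 := hPL (x s)
          show 2*μ*(f (x s) - fstar) ≤ ‖gradient f (x s)‖^2
          linarith
        calc u ≤ Real.sqrt (G^2) := Real.sqrt_le_sqrt h1
          _ = G := by rw [Real.sqrt_sq hGpos.le]
      have hDs : D s = -(α * Real.exp G * G) := hDval s hne
      have hmono : u * Real.exp u ≤ G * Real.exp G := mul_exp_mono_aux hupos.le huG
      have hune : u ≠ 0 := hupos.ne'
      have hexpne : Real.exp u ≠ 0 := (Real.exp_pos u).ne'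
      have hRHS : Real.exp (-u) * (-(1 / (2 * u) * (2*μ*D s)))
          = α * μ * (G * Real.exp G) / (u * Real.exp u) := by
        rw [hDs, Real.exp_neg]
        field_simp
      rw [hRHS, le_div_iff₀ (by positivity)]
      calc α * μ * (u * Real.exp u) ≤ α * μ * (G * Real.exp G) :=
            mul_le_mul_of_nonneg_left hmono hαμ.le
        _ = α * μ * (G * Real.exp G) := rfl
    have hφc : ContinuousOn φ (Icc (0:ℝ) (1/(α*μ))) := by
      apply Real.continuous_exp.comp_continuousOn
      apply ContinuousOn.neg
      apply Real.continuous_sqrt.comp_continuousOn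
      exact (continuousOn_const.mul (hVc.mono Icc_subset_Ici_self))
    have hintIcc : interior (Icc (0:ℝ) (1/(α*μ))) = Ioo 0 (1/(α*μ)) :=
      interior_Icc
    have hφdiff : DifferentiableOn ℝ φ (interior (Icc (0:ℝ) (1/(α*μ)))) := by
      rw [hintIcc]
      exact fun s hs => ((hφder s hs).differentiableAt).differentiableWithinAt
    have hmvt := (convex_Icc (0:ℝ) (1/(α*μ))).mul_sub_le_image_sub_of_le_deriv
      hφc hφdiff (C := α*μ)
      (fun s hs => by
        rw [hintIcc] at hs
        rw [(hφder s hs).deriv]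
        exact hφbound s hs)
      0 (by constructor <;> [rfl; exact hT0.le])
      (1/(α*μ)) (by constructor <;> [exact hT0.le; rfl])
      hT0.le
    have h1 : α * μ * (1/(α*μ) - 0) = 1 := by field_simp; ring
    rw [h1] at hmvt
    have hφ0 : 0 < φ 0 := Real.exp_pos _
    have hφT : φ (1/(α*μ)) ≤ 1 := by
      apply Real.exp_le_one_iff.2
      simp [Real.sqrt_nonneg]
    linarith
  intro t ht
  have hVt : V t ≤ 0 := by
    have := hanti (mem_Ici.2 hT0.le) (mem_Ici.2 (le_trans hT0.le ht)) ht
    rw [hVT] at this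
    exact this
  have : V t = 0 := le_antisymm hVt (hVnn t)
  simpa [hVdef, sub_eq_zero] using this
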